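/- Let f₀, f₁, ..., fₚ : ℝⁿ → ℝ and ℱ = Im(f₀, -f₁, ..., -fₚ). Assume there exists x₀ with fᵢ(x₀) > 0 for all i = 1,...,p, and there exists a set 𝒵 ⊆ ℝ₊^{p+1} with 0 ∈ 𝒵 such that ℝ₊ · (ℱ + 𝒵) is convex. If (fᵢ(x) ≥ 0 for all i = 1,...,p) implies f₀(x) ≥ 0 for all x ∈ ℝⁿ, then there exist α₁,...,αₚ ≥ 0 such that f₀(x) - Σᵢ αᵢ fᵢ(x) ≥ 0 for all x ∈ ℝⁿ. -/

import Mathlib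

open Pointwise

theorem s_procedure_convexifier (n p : ℕ)
    (f0 : (Fin n → ℝ) → ℝ) (f : Fin p → (Fin n → ℝ) → ℝ)
    (hS : ∃ x0 : Fin n → ℝ, ∀ i, 0 < f i x0)
    (Z : Set (Fin (p + 1) → ℝ)) (hZ : Z ⊆ {z | ∀ i, 0 ≤ z i}) (h0Z : (0 : Fin (p + 1) → ℝ) ∈ Z)
    (hconv : Convex ℝ {w : Fin (p + 1) → ℝ | ∃ t : ℝ, 0 ≤ t ∧
      ∃ s ∈ ({z : Fin (p + 1) → ℝ | ∃ x, z = Fin.cons (f0 x) (fun i => -(f i x))} + Z :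
        Set (Fin (p + 1) → ℝ)), w = t • s})
    (hI : ∀ x, (∀ i, 0 ≤ f i x) → 0 ≤ f0 x) :
    ∃ α : Fin p → ℝ, (∀ i, 0 ≤ α i) ∧ ∀ x, 0 ≤ f0 x - ∑ i, α i * f i x := by
  obtain ⟨x0, hx0⟩ := hS
  set F : Set (Fin (p + 1) → ℝ) :=
    {z | ∃ x, z = Fin.cons (f0 x) (fun i => -(f i x))} with hF
  set C : Set (Fin (p + 1) → ℝ) :=
    {w | ∃ t : ℝ, 0 ≤ t ∧ ∃ s ∈ (F + Z), w = t • s} with hCdef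
  set O : Set (Fin (p + 1) → ℝ) := Set.univ.pi (fun _ => Set.Iio (0 : ℝ)) with hOdef
  have hOmem : ∀ w : Fin (p + 1) → ℝ, w ∈ O ↔ ∀ j, w j < 0 := by
    intro w; simp [hOdef, Set.mem_pi]
  have hOopen : IsOpen O := isOpen_set_pi Set.finite_univ (fun i _ => isOpen_Iio)
  have hOconv : Convex ℝ O := convex_pi (fun i _ => convex_Iio 0)
  -- disjointness of O and C
  have hdisj : Disjoint O C := by
    rw [Set.disjoint_left]
    rintro w hwO ⟨t, ht, s, ⟨z, ⟨x, rfl⟩, ζ, hζ, rfl⟩, rfl⟩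
    rw [hOmem] at hwO
    have htpos : 0 < t := by
      rcases lt_or_eq_of_le ht with h | h
      · exact h
      · exfalso; have := hwO 0; rw [← h] at this; simp at this
    have hζn := hZ hζ
    have hfx : ∀ i, 0 ≤ f i x := by
      intro i
      have h1 := hwO i.succ
      simp only [Pi.smul_apply, Pi.add_apply, Fin.cons_succ, smul_eq_mul] at h1
      have := hζn i.succ
      nlinarith
    have h0 : 0 ≤ f0 x := hI x hfx
    have h2 := hwO 0
    simp only [Pi.smul_apply, Pi.add_apply, Fin.cons_zero, smul_eq_mul] at h2
    nlinarith [hζn 0]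
  -- separating hyperplane
  obtain ⟨φ, u, hφO, hφC⟩ := geometric_hahn_banach_open hOconv hOopen hconv hdisj
  have h0C : (0 : Fin (p + 1) → ℝ) ∈ C := by
    refine ⟨0, le_refl 0, Fin.cons (f0 x0) (fun i => -(f i x0)) + 0, ?_, (zero_smul ℝ _).symm⟩
    exact Set.add_mem_add ⟨x0, rfl⟩ h0Z
  have hu0 : u ≤ 0 := by simpa using hφC 0 h0C
  have hφOneg : ∀ w ∈ O, φ w < 0 := fun w hw => lt_of_lt_of_le (hφO w hw) hu0
  set lam : Fin (p + 1) → ℝ := fun j => φ ((Pi.single j 1 : Fin (p+1) → ℝ)) with hlam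
  have hsingle : ∀ j : Fin (p + 1), (Pi.single j 1 : Fin (p+1) → ℝ) = fun k => if j = k then 1 else 0 := by
    intro j; funext k; simp [Pi.single_apply, eq_comm]
  have hφeq : ∀ w : Fin (p + 1) → ℝ, φ w = ∑ j, w j * lam j := by
    intro w
    conv_lhs => rw [pi_eq_sum_univ w]
    rw [map_sum]
    refine Finset.sum_congr rfl (fun j _ => ?_)
    rw [map_smul, ← hsingle j, smul_eq_mul]
  -- each lam j is nonnegative
  have hlamnn : ∀ j, 0 ≤ lam j := by
    intro j
    by_contra hneg
    push_neg at hneg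
    set c : ℝ := φ (fun _ => 1) with hc
    have key : ∀ ε : ℝ, 0 < ε → -ε * c - lam j < 0 := by
      intro ε hε
      set wv : Fin (p + 1) → ℝ := (-ε) • (fun _ => (1:ℝ)) + (-1 : ℝ) • (Pi.single j 1 : Fin (p+1) → ℝ) with hwv
      have hmem : wv ∈ O := by
        rw [hOmem]; intro k
        by_cases h : k = j <;> simp [hwv, Pi.single_apply, h] <;> linarith
      have := hφOneg _ hmem
      rw [hwv, map_add, map_smul, map_smul] at this
      simpa [hc, hlam] using this
    rcases le_or_gt c 0 with hcle | hcpos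
    · have := key 1 one_pos; linarith
    · have := key (-lam j / (2 * c)) (div_pos (by linarith) (by linarith))
      have h2 : -(-lam j / (2 * c)) * c = lam j / 2 := by field_simp
      rw [h2] at this; linarith
  -- total sum of lam is positive
  have hsumpos : 0 < ∑ j, lam j := by
    have hmem : (fun _ => (-1 : ℝ)) ∈ O := by rw [hOmem]; intro k; norm_num
    have := hφOneg _ hmem
    rw [hφeq] at this
    simp only [neg_one_mul, Finset.sum_neg_distrib] at this
    linarith
  -- φ nonneg on C
  have hCnn : ∀ w ∈ C, 0 ≤ φ w := by
    rintro w ⟨t, ht, s, hs, rfl⟩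
    by_contra h
    push_neg at h
    set v := φ (t • s) with hv
    have hscale : ∀ c : ℝ, 0 < c → u ≤ c * v := by
      intro c hc
      have hmem : c • (t • s) ∈ C := ⟨c * t, by positivity, s, hs, smul_smul c t s⟩
      have := hφC _ hmem
      rwa [map_smul, smul_eq_mul, ← hv] at this
    have hne : v ≠ 0 := ne_of_lt h
    have hcpos : (0:ℝ) < u / v + 1 := by
      have : 0 ≤ u / v := by
        rw [div_nonneg_iff]; right; exact ⟨hu0, le_of_lt h⟩
      linarith
    have := hscale _ hcpos
    have heq : (u / v + 1) * v = u + v := by field_simp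
    rw [heq] at this
    linarith
  -- key inequality for every x
  have key : ∀ x, 0 ≤ lam 0 * f0 x - ∑ i, lam i.succ * f i x := by
    intro x
    have hmem : (Fin.cons (f0 x) (fun i => -(f i x)) + 0 : Fin (p+1) → ℝ) ∈ C :=
      ⟨1, zero_le_one, _, Set.add_mem_add ⟨x, rfl⟩ h0Z, (one_smul ℝ _).symm⟩
    have h1 := hCnn _ hmem
    rw [hφeq, Fin.sum_univ_succ] at h1
    simp only [Pi.add_apply, Fin.cons_zero, Fin.cons_succ, Pi.zero_apply, add_zero,
      neg_mul] at h1
    rw [Finset.sum_neg_distrib] at h1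
    have : ∑ i, f i x * lam i.succ = ∑ i, lam i.succ * f i x :=
      Finset.sum_congr rfl (fun i _ => mul_comm _ _)
    linarith [this ▸ h1]
  -- lam 0 is positive
  have hlam0 : 0 < lam 0 := by
    rcases lt_or_eq_of_le (hlamnn 0) with h | h
    · exact h
    · exfalso
      have hk := key x0
      rw [← h, zero_mul, zero_sub] at hk
      have hsum' : 0 < ∑ i : Fin p, lam i.succ := by
        have : ∑ j, lam j = lam 0 + ∑ i : Fin p, lam i.succ := Fin.sum_univ_succ lam
        rw [this, ← h, zero_add] at hsumpos
        exact hsumpos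
      obtain ⟨i, _, hi⟩ := Finset.exists_lt_of_sum_lt (by simpa using hsum' :
        ∑ _i : Fin p, (0:ℝ) < ∑ i : Fin p, lam i.succ)
      have hterm : 0 < lam i.succ * f i x0 := mul_pos hi (hx0 i)
      have hle : lam i.succ * f i x0 ≤ ∑ i, lam i.succ * f i x0 :=
        Finset.single_le_sum (fun i _ => mul_nonneg (hlamnn i.succ) (le_of_lt (hx0 i)))
          (Finset.mem_univ i)
      linarith
  refine ⟨fun i => lam i.succ / lam 0, fun i => div_nonneg (hlamnn i.succ) (le_of_lt hlam0), ?_⟩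
  intro x
  have hk := key x
  have hsum : ∑ i, lam i.succ / lam 0 * f i x = (∑ i, lam i.succ * f i x) / lam 0 := by
    rw [Finset.sum_div]
    exact Finset.sum_congr rfl (fun i _ => (div_mul_eq_mul_div _ _ _))
  rw [hsum]
  rw [sub_nonneg, div_le_iff₀ hlam0]
  nlinarith
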